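/- (Positive bias of the CR estimator in a homogeneous market.) Let λ > 0 and 0 < φ < φ̃. Write ψ = φ·F(φ) and ψ̃ = φ̃·F(φ̃), so ψ̃ > ψ. For a ∈ (0,1), define the limiting CR estimator value E_CR(a) = λ·(ψ̃ − ψ)·F(λ·(a·ψ̃ + (1−a)·ψ)) and GTE = λ·(ψ̃·F(λψ̃) − ψ·F(λψ)). Then E_CR(a) > GTE for all a ∈ (0,1). -/

import Mathlib

noncomputable def F : ℝ → ℝ := fun x => if x = 0 then 1 else (1 - Real.exp (-x)) / x

lemma F_def_pos {x : ℝ} (hx : 0 < x) : F x = (1 - Real.exp (-x)) / x := by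
  simp [F, hx.ne']

lemma exp_neg_lt_one {x : ℝ} (hx : 0 < x) : Real.exp (-x) < 1 := by
  rw [show (1:ℝ) = Real.exp 0 by simp]
  exact Real.exp_lt_exp.mpr (by linarith)

lemma F_pos {x : ℝ} (hx : 0 < x) : 0 < F x := by
  rw [F_def_pos hx]
  exact div_pos (by linarith [exp_neg_lt_one hx]) hx

lemma mulF {x : ℝ} (hx : 0 < x) : x * F x = 1 - Real.exp (-x) := by
  rw [F_def_pos hx, mul_div_cancel₀ _ hx.ne']

/-- strict convexity of exp on the chord from 0 to -v, evaluated at -u -/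
lemma key {u v : ℝ} (hu : 0 < u) (huv : u < v) :
    v * Real.exp (-u) < (v - u) + u * Real.exp (-v) := by
  have hv : 0 < v := hu.trans huv
  have hne : (0:ℝ) ≠ -v := by intro h; nlinarith
  have h := strictConvexOn_exp.2 (Set.mem_univ (0:ℝ)) (Set.mem_univ (-v)) hne
    (show (0:ℝ) < 1 - u / v by rw [sub_pos, div_lt_one hv]; exact huv)
    (show (0:ℝ) < u / v from div_pos hu hv)
    (show (1 - u / v) + u / v = 1 by ring)
  have harg : (1 - u / v) • (0:ℝ) + (u / v) • (-v) = -u := by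
    simp only [smul_eq_mul, mul_zero, zero_add, mul_neg, div_mul_cancel₀ u hv.ne']
  rw [harg] at h
  simp only [smul_eq_mul, Real.exp_zero, mul_one] at h
  have h2 := mul_lt_mul_of_pos_left h hv
  have e : v * ((1 - u / v) + u / v * Real.exp (-v)) = (v - u) + u * Real.exp (-v) := by
    field_simp
  linarith [e ▸ h2]

/-- F is strictly antitone on positives -/
lemma F_anti {t v : ℝ} (ht : 0 < t) (htv : t < v) : F v < F t := by
  have hv : 0 < v := ht.trans htv
  have h := key ht htv
  rw [F_def_pos ht, F_def_pos hv, div_lt_div_iff₀ hv ht]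
  linarith

/-- chord bound from convexity -/
lemma chord {u v : ℝ} (hu : 0 < u) (huv : u < v) :
    Real.exp (-u) - Real.exp (-v) ≤ (v - u) * F v := by
  have hv : 0 < v := hu.trans huv
  have h := key hu huv
  rw [F_def_pos hv]
  have e : (v - u) * ((1 - Real.exp (-v)) / v) = ((v - u) * (1 - Real.exp (-v))) / v := by
    ring
  rw [e, le_div_iff₀ hv]
  nlinarith

theorem stmt_6 (lam φ φt : ℝ) (hlam : 0 < lam) (hφ : 0 < φ) (hlt : φ < φt)
    (a : ℝ) (ha : a ∈ Set.Ioo (0:ℝ) 1) :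
    lam * (φt * F φt * F (lam * φt * F φt) - φ * F φ * F (lam * φ * F φ))
      < lam * (φt * F φt - φ * F φ)
          * F (lam * (a * (φt * F φt) + (1 - a) * (φ * F φ))) := by
  obtain ⟨ha0, ha1⟩ := ha
  have hφt : 0 < φt := hφ.trans hlt
  have hA : 0 < φ * F φ := mul_pos hφ (F_pos hφ)
  have hB : 0 < φt * F φt := mul_pos hφt (F_pos hφt)
  have hAB : φ * F φ < φt * F φt := by
    have h1 := mulF hφ
    have h2 := mulF hφt
    have h3 : Real.exp (-φt) < Real.exp (-φ) := Real.exp_lt_exp.mpr (by linarith)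
    linarith
  set A := φ * F φ with hAdef
  set B := φt * F φt with hBdef
  have hu : 0 < lam * A := mul_pos hlam hA
  have hv : 0 < lam * B := mul_pos hlam hB
  have huv : lam * A < lam * B := (mul_lt_mul_iff_right₀ hlam).mpr hAB
  have e1 : lam * φt * F φt = lam * B := by rw [hBdef]; ring
  have e2 : lam * φ * F φ = lam * A := by rw [hAdef]; ring
  rw [e1, e2]
  -- LHS equals exp(-(lam*A)) - exp(-(lam*B))
  have hL : lam * (B * F (lam * B) - A * F (lam * A))
      = Real.exp (-(lam * A)) - Real.exp (-(lam * B)) := by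
    have m1 := mulF hu
    have m2 := mulF hv
    have : lam * (B * F (lam * B) - A * F (lam * A))
        = (lam * B) * F (lam * B) - (lam * A) * F (lam * A) := by ring
    rw [this, m1, m2]; ring
  rw [hL]
  -- the argument of F on the RHS
  set t := lam * (a * B + (1 - a) * A) with htdef
  have ht0 : lam * A < t := by rw [htdef]; nlinarith
  have htv : t < lam * B := by rw [htdef]; nlinarith
  have htpos : 0 < t := hu.trans ht0
  calc Real.exp (-(lam * A)) - Real.exp (-(lam * B))
      ≤ (lam * B - lam * A) * F (lam * B) := chord hu huv
    _ < (lam * B - lam * A) * F t := by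
        exact mul_lt_mul_of_pos_left (F_anti htpos htv) (by linarith)
    _ = lam * (B - A) * F t := by ring
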